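/- Let K be a complete nonarchimedean discretely valued field with valuation ring K°, and let T₁ = K{y} be the Tate algebra of restricted power series in one variable (power series Σ aₙ yⁿ with |aₙ| → 0). Then every nonzero f ∈ T₁ can be written as f = u·g where u ∈ T₁^× is a unit and g ∈ K°[y] is a polynomial with coefficients in the valuation ring; moreover g can be chosen monic after scaling. -/

import Mathlib

open scoped NNReal
open Filter

/-- A power series over a valued field is *restricted* (i.e. lies in the one-variable
Tate algebra `T₁ = K{y}`) if its coefficients tend to `0`. -/
def IsRestrictedPS (K : Type) [Field K] [Valued K ℝ≥0] (f : PowerSeries K) : Prop :=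
  Tendsto (fun n : ℕ => Valued.v (PowerSeries.coeff n f)) atTop (nhds 0)

section Aux

open PowerSeries

variable {K : Type} [Field K] [Valued K ℝ≥0]

lemma aux_isClosed_vle (c : ℝ≥0) : IsClosed {x : K | Valued.v x ≤ c} := by
  rw [← isOpen_compl_iff, isOpen_iff_mem_nhds]
  intro y hy
  simp only [Set.mem_compl_iff, Set.mem_setOf_eq, not_le] at hy
  have hy0 : Valued.v y ≠ 0 := fun h => by rw [h] at hy; exact absurd hy (not_lt.2 zero_le)
  rw [Valued.mem_nhds]
  refine ⟨Units.mk0 (Valued.v.restrict y) (by simpa using hy0), fun z hz => ?_⟩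
  simp only [Set.mem_setOf_eq, Units.val_mk0, Valuation.restrict_lt_iff] at hz ⊢
  have h2 : Valued.v (y + (z - y)) = Valued.v y := Valued.v.map_add_eq_of_lt_left (by simpa using hz)
  have h3 : Valued.v z = Valued.v y := by simpa using h2
  simp only [Set.mem_compl_iff, Set.mem_setOf_eq, not_le, h3]
  exact hy

lemma aux_nonarch : NonarchimedeanAddGroup K := by
  constructor
  intro U hU
  obtain ⟨γ, hγ⟩ := Valued.mem_nhds_zero.1 hU
  refine ⟨⟨Valued.v.restrict.ltAddSubgroup γ, ?_⟩, hγ⟩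
  rw [isOpen_iff_mem_nhds]
  intro y hy
  rw [Valued.mem_nhds]
  refine ⟨γ, fun z hz => ?_⟩
  have h1 : Valued.v.restrict z ≤ max (Valued.v.restrict (z - y)) (Valued.v.restrict y) := by
    simpa using Valued.v.restrict.map_add (z - y) y
  exact lt_of_le_of_lt h1 (max_lt hz hy)

lemma aux_tendsto_zero {x : ℕ → K} (h : Tendsto (fun i => Valued.v (x i)) atTop (nhds 0)) :
    Tendsto x atTop (nhds 0) := by
  intro U hU
  obtain ⟨γ, hγ⟩ := Valued.mem_nhds_zero.1 hU
  have hγ0 := (Valued.v.restrict_lt_iff_lt_embedding (x := (0:K)) (g := γ.1)).1 (by simp [Units.zero_lt])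
  rw [map_zero] at hγ0
  have : ∀ᶠ i in atTop, Valued.v (x i) < _ :=
    h (Iio_mem_nhds hγ0)
  exact Filter.mem_of_superset this (fun i hi => hγ (Valued.v.restrict_lt_iff_lt_embedding.2 hi))

lemma aux_summable [CompleteSpace K] {x : ℕ → K}
    (h : Tendsto (fun i => Valued.v (x i)) atTop (nhds 0)) : Summable x := by
  have := aux_nonarch (K := K)
  refine NonarchimedeanAddGroup.summable_of_tendsto_cofinite_zero ?_
  rw [Nat.cofinite_eq_atTop]
  exact aux_tendsto_zero h

lemma aux_v_tsum_le [CompleteSpace K] {x : ℕ → K} {c : ℝ≥0} (hs : Summable x)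
    (h : ∀ i, Valued.v (x i) ≤ c) : Valued.v (∑' i, x i) ≤ c := by
  have hten := hs.hasSum
  have : ∀ s : Finset ℕ, (∑ i ∈ s, x i) ∈ {y : K | Valued.v y ≤ c} :=
    fun s => Valued.v.map_sum_le (fun i _ => h i)
  exact (aux_isClosed_vle c).mem_of_tendsto hten (Filter.Eventually.of_forall this)

lemma aux_tendsto_iff {f : ℕ → ℝ≥0} :
    Tendsto f atTop (nhds 0) ↔ ∀ ε : ℝ≥0, 0 < ε → ∀ᶠ n in atTop, f n < ε := by
  rw [tendsto_order]
  constructor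
  · exact fun h ε hε => h.2 ε hε
  · exact fun h => ⟨fun a ha => absurd ha (not_lt.2 (zero_le)), h⟩

lemma aux_restricted_add {f g : PowerSeries K} (hf : IsRestrictedPS K f)
    (hg : IsRestrictedPS K g) : IsRestrictedPS K (f + g) := by
  rw [IsRestrictedPS, aux_tendsto_iff]
  intro ε hε
  filter_upwards [(aux_tendsto_iff.1 hf) ε hε, (aux_tendsto_iff.1 hg) ε hε] with n h1 h2
  simp only [map_add]
  exact lt_of_le_of_lt (Valued.v.map_add _ _) (max_lt h1 h2)

lemma aux_restricted_neg {f : PowerSeries K} (hf : IsRestrictedPS K f) :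
    IsRestrictedPS K (-f) := by
  rw [IsRestrictedPS] at hf ⊢
  simpa using hf

lemma aux_restricted_sub {f g : PowerSeries K} (hf : IsRestrictedPS K f)
    (hg : IsRestrictedPS K g) : IsRestrictedPS K (f - g) := by
  rw [sub_eq_add_neg]; exact aux_restricted_add hf (aux_restricted_neg hg)

lemma aux_restricted_C_mul (c : K) {f : PowerSeries K} (hf : IsRestrictedPS K f) :
    IsRestrictedPS K (PowerSeries.C c * f) := by
  rw [IsRestrictedPS, aux_tendsto_iff]
  intro ε hε
  rcases eq_or_ne (Valued.v c) 0 with h0 | h0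
  · filter_upwards with n
    simp [PowerSeries.coeff_C_mul, map_mul, h0, hε]
  · filter_upwards [(aux_tendsto_iff.1 hf) (ε / Valued.v c) (by positivity)] with n hn
    rw [PowerSeries.coeff_C_mul, map_mul]
    calc Valued.v c * Valued.v (PowerSeries.coeff n f)
        < Valued.v c * (ε / Valued.v c) := by
          exact mul_lt_mul_of_pos_left hn (pos_iff_ne_zero.2 h0)
      _ = ε := by field_simp
  
lemma aux_restricted_poly (p : Polynomial K) : IsRestrictedPS K (p : PowerSeries K) := by
  rw [IsRestrictedPS, aux_tendsto_iff]
  intro ε hε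
  filter_upwards [Filter.eventually_gt_atTop p.natDegree] with n hn
  rw [Polynomial.coeff_coe, Polynomial.coeff_eq_zero_of_natDegree_lt hn]
  simpa using hε

lemma aux_restricted_poly_mul {p : Polynomial K} (hp : ∀ i, Valued.v (p.coeff i) ≤ 1)
    {B : PowerSeries K} (hB : IsRestrictedPS K B) : IsRestrictedPS K ((p : PowerSeries K) * B) := by
  rw [IsRestrictedPS, aux_tendsto_iff]
  intro ε hε
  obtain ⟨D, hD⟩ := (aux_tendsto_iff.1 hB ε hε).exists_forall_of_atTop
  filter_upwards [Filter.eventually_gt_atTop (p.natDegree + D)] with n hn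
  rw [PowerSeries.coeff_mul]
  refine Valued.v.map_sum_lt (ne_of_gt hε) ?_
  rintro ⟨i, j⟩ hij
  rw [Finset.HasAntidiagonal.mem_antidiagonal] at hij
  rcases le_or_gt i p.natDegree with hi | hi
  · have hj : D ≤ j := by omega
    rw [map_mul, Polynomial.coeff_coe]
    calc Valued.v (p.coeff i) * Valued.v ((coeff j) B)
        ≤ 1 * Valued.v ((coeff j) B) := mul_le_mul_left (hp i) _
      _ = Valued.v ((coeff j) B) := one_mul _
      _ < ε := hD j hj
  · rw [Polynomial.coeff_coe, Polynomial.coeff_eq_zero_of_natDegree_lt hi]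
    simpa using hε

lemma aux_seq_max {vv : ℕ → ℝ≥0} (h0 : ∃ k, vv k ≠ 0) (hten : Tendsto vv atTop (nhds 0)) :
    ∃ N, vv N ≠ 0 ∧ (∀ n, vv n ≤ vv N) ∧ ∀ n, N < n → vv n < vv N := by
  classical
  obtain ⟨k, hk⟩ := h0
  have hkpos : 0 < vv k := pos_iff_ne_zero.2 hk
  obtain ⟨D, hD⟩ := ((aux_tendsto_iff.1 hten) _ hkpos).exists_forall_of_atTop
  have hDk : k < D + 1 := by
    by_contra h
    exact absurd (hD k (by omega)) (lt_irrefl _)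
  let S : Finset ℕ := (Finset.range (D + 1)).filter (fun n => vv k ≤ vv n)
  have hkS : k ∈ S := Finset.mem_filter.2 ⟨Finset.mem_range.2 hDk, le_refl _⟩
  have hle : ∀ n, vv n ≤ S.sup vv := by
    intro n
    by_cases hn : n ∈ S
    · exact Finset.le_sup hn
    · rcases lt_or_ge n (D + 1) with h1 | h1
      · have h2 : ¬ vv k ≤ vv n := fun hc => hn (Finset.mem_filter.2 ⟨Finset.mem_range.2 h1, hc⟩)
        exact le_trans (le_of_lt (not_le.1 h2)) (Finset.le_sup hkS)
      · exact le_trans (le_of_lt (hD n (by omega))) (Finset.le_sup hkS)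
  obtain ⟨n₀, hn₀S, hn₀⟩ := Finset.exists_mem_eq_sup S ⟨k, hkS⟩ vv
  let T : Finset ℕ := S.filter (fun n => vv n = S.sup vv)
  have hTne : T.Nonempty := ⟨n₀, Finset.mem_filter.2 ⟨hn₀S, hn₀.symm⟩⟩
  refine ⟨T.max' hTne, ?_, ?_, ?_⟩
  · have hvN : vv (T.max' hTne) = S.sup vv := (Finset.mem_filter.1 (T.max'_mem hTne)).2
    rw [hvN]
    exact fun hc => hk (le_antisymm (hc ▸ hle k) (zero_le))
  · intro n
    have hvN : vv (T.max' hTne) = S.sup vv := (Finset.mem_filter.1 (T.max'_mem hTne)).2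
    rw [hvN]; exact hle n
  · intro n hn
    have hvN : vv (T.max' hTne) = S.sup vv := (Finset.mem_filter.1 (T.max'_mem hTne)).2
    rw [hvN]
    refine lt_of_le_of_ne (hle n) (fun hc => ?_)
    have hnS : n ∈ S := by
      rcases lt_or_ge n (D+1) with h3 | h3
      · exact Finset.mem_filter.2 ⟨Finset.mem_range.2 h3, hc ▸ hle k⟩
      · exact absurd (hc ▸ hD n (by omega)) (not_lt.2 (hle k))
    exact absurd (Finset.le_max' T n (Finset.mem_filter.2 ⟨hnS, hc⟩)) (not_le.2 hn)

lemma aux_exists_max {f : PowerSeries K} (hf : IsRestrictedPS K f) (hf0 : f ≠ 0) :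
    ∃ N : ℕ, (PowerSeries.coeff N f ≠ 0) ∧
      (∀ n, Valued.v (PowerSeries.coeff n f) ≤ Valued.v (PowerSeries.coeff N f)) ∧
      (∀ n, N < n → Valued.v (PowerSeries.coeff n f) < Valued.v (PowerSeries.coeff N f)) := by
  have h0 : ∃ k, Valued.v (PowerSeries.coeff k f) ≠ 0 := by
    by_contra h
    push_neg at h
    refine hf0 (PowerSeries.ext fun n => ?_)
    have := h n
    rw [Valuation.zero_iff] at this
    simpa using this
  obtain ⟨N, h1, h2, h3⟩ := aux_seq_max h0 hf
  exact ⟨N, by simpa [Valuation.zero_iff] using h1, h2, h3⟩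

lemma aux_le_vpi {π : K} (hπ0 : Valued.v π ≠ 0) (hπ1 : Valued.v π < 1)
    (hdisc : ∀ x : K, x ≠ 0 → ∃ n : ℤ, Valued.v x = Valued.v π ^ n)
    {x : K} (hx : Valued.v x < 1) : Valued.v x ≤ Valued.v π := by
  rcases eq_or_ne x 0 with rfl | hx0
  · simp
  obtain ⟨n, hn⟩ := hdisc x hx0
  rw [hn] at hx ⊢
  have h1 : 1 ≤ n := by
    by_contra h
    push_neg at h
    have heq : Valued.v π ^ n * Valued.v π ^ (-n) = 1 := by
      rw [← zpow_add₀ hπ0]; simp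
    have h2 : Valued.v π ^ (-n) ≤ 1 := by
      rw [show (-n) = ((-n).toNat : ℤ) by omega, zpow_natCast]
      exact pow_le_one₀ (zero_le) (le_of_lt hπ1)
    have h3 : (1:ℝ≥0) ≤ Valued.v π ^ n := by
      calc (1:ℝ≥0) = Valued.v π ^ n * Valued.v π ^ (-n) := heq.symm
        _ ≤ Valued.v π ^ n * 1 := mul_le_mul_right h2 _
        _ = Valued.v π ^ n := mul_one _
    exact absurd hx (not_lt.2 h3)
  have heq2 : Valued.v π ^ n = Valued.v π * Valued.v π ^ (n - 1) := by
    rw [show n = 1 + (n-1) by omega, zpow_add₀ hπ0, zpow_one]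
    ring_nf
  rw [heq2, show (n - 1) = ((n-1).toNat : ℤ) by omega, zpow_natCast]
  calc Valued.v π * Valued.v π ^ (n-1).toNat ≤ Valued.v π * 1 :=
        mul_le_mul_right (pow_le_one₀ (zero_le) (le_of_lt hπ1)) _
    _ = Valued.v π := mul_one _

lemma aux_gauss {F q : PowerSeries K} {N m : ℕ}
    (hFle : ∀ n, Valued.v (coeff n F) ≤ Valued.v (coeff N F))
    (hFlt : ∀ n, N < n → Valued.v (coeff n F) < Valued.v (coeff N F))
    (hF0 : Valued.v (coeff N F) ≠ 0)
    (hqle : ∀ n, Valued.v (coeff n q) ≤ Valued.v (coeff m q))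
    (hqlt : ∀ n, m < n → Valued.v (coeff n q) < Valued.v (coeff m q))
    (hq0 : Valued.v (coeff m q) ≠ 0) :
    Valued.v (coeff (m + N) (q * F)) = Valued.v (coeff m q) * Valued.v (coeff N F) := by
  rw [PowerSeries.coeff_mul]
  have hmem : ((m : ℕ), (N : ℕ)) ∈ Finset.HasAntidiagonal.antidiagonal (m + N) := by
    simp [Finset.HasAntidiagonal.mem_antidiagonal]
  rw [← Finset.add_sum_erase _ _ hmem]
  rw [Valued.v.map_add_eq_of_lt_left, map_mul]
  refine Valued.v.map_sum_lt (by rw [map_mul]; exact mul_ne_zero hq0 hF0) ?_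
  rintro ⟨i, j⟩ hij
  rw [Finset.mem_erase, Finset.HasAntidiagonal.mem_antidiagonal] at hij
  obtain ⟨hne, hsum⟩ := hij
  rw [map_mul, map_mul]
  rcases lt_or_ge m i with hi | hi
  · calc Valued.v (coeff i q) * Valued.v (coeff j F)
        ≤ Valued.v (coeff i q) * Valued.v (coeff N F) := mul_le_mul_right (hFle j) _
      _ < Valued.v (coeff m q) * Valued.v (coeff N F) :=
        mul_lt_mul_of_pos_right (hqlt i hi) (pos_iff_ne_zero.2 hF0)
  · have hi2 : i < m := by
      rcases lt_or_eq_of_le hi with h | h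
      · exact h
      · exfalso; apply hne; simp [h]; omega
    have hj : N < j := by omega
    calc Valued.v (coeff i q) * Valued.v (coeff j F)
        ≤ Valued.v (coeff m q) * Valued.v (coeff j F) := mul_le_mul_left (hqle i) _
      _ < Valued.v (coeff m q) * Valued.v (coeff N F) :=
        mul_lt_mul_of_pos_left (hFlt j hj) (pos_iff_ne_zero.2 hq0)

lemma aux_polydiv (A : Polynomial K) (hA : A.Monic) (hA1 : ∀ i, Valued.v (A.coeff i) ≤ 1) :
    ∀ d : ℕ, ∀ P : Polynomial K, P.natDegree ≤ d → (∀ i, Valued.v (P.coeff i) ≤ 1) →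
    ∃ Q R : Polynomial K, R.degree < A.degree ∧ (∀ i, Valued.v (Q.coeff i) ≤ 1) ∧
      (∀ i, Valued.v (R.coeff i) ≤ 1) ∧ P = Q * A + R := by
  have hA0 : A ≠ 0 := hA.ne_zero
  intro d
  induction d using Nat.strong_induction_on with
  | _ d ih =>
    intro P hPd hP
    by_cases hdeg : P.degree < A.degree
    · exact ⟨0, P, hdeg, by simp, hP, by simp⟩
    push_neg at hdeg
    have hP0 : P ≠ 0 := by
      intro h
      rw [h, Polynomial.degree_zero] at hdeg
      exact (not_le.2 (bot_lt_iff_ne_bot.2 (Polynomial.degree_ne_bot.2 hA0))) hdeg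
    have hNd : A.natDegree ≤ P.natDegree := Polynomial.natDegree_le_natDegree hdeg
    set k := P.natDegree - A.natDegree with hk
    set lc := P.leadingCoeff with hlc
    have hlc1 : Valued.v lc ≤ 1 := hP P.natDegree
    set E : Polynomial K := Polynomial.C lc * Polynomial.X ^ k * A with hE
    have hEdeg : E.degree = P.degree := by
      rw [hE]
      rw [Polynomial.degree_mul, Polynomial.degree_mul, Polynomial.degree_C
        (Polynomial.leadingCoeff_ne_zero.2 hP0), Polynomial.degree_X_pow]
      rw [Polynomial.degree_eq_natDegree hP0, Polynomial.degree_eq_natDegree hA0]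
      rw [zero_add]
      norm_cast
      omega
    have hElc : E.leadingCoeff = P.leadingCoeff := by
      rw [hE, Polynomial.leadingCoeff_mul, Polynomial.leadingCoeff_mul, hA.leadingCoeff,
        Polynomial.leadingCoeff_C, Polynomial.leadingCoeff_X_pow]
      simp [hlc]
    have hEco : ∀ i, Valued.v (E.coeff i) ≤ 1 := by
      intro i
      have hre : E = Polynomial.C lc * (A * Polynomial.X ^ k) := by rw [hE]; ring
      rw [hre, Polynomial.coeff_C_mul, Polynomial.coeff_mul_X_pow', map_mul]
      split_ifs with h
      · exact mul_le_one' hlc1 (hA1 _)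
      · simp
    have hQk : ∀ i, Valued.v ((Polynomial.C lc * Polynomial.X ^ k).coeff i) ≤ 1 := by
      intro i
      rw [Polynomial.coeff_C_mul, Polynomial.coeff_X_pow, map_mul]
      split_ifs with h
      · simpa using hlc1
      · simp
    have hsub : (P - E).degree < P.degree :=
      Polynomial.degree_sub_lt hEdeg.symm hP0 hElc.symm
    by_cases hPE : P - E = 0
    · refine ⟨Polynomial.C lc * Polynomial.X ^ k, 0, ?_, hQk, by simp, ?_⟩
      · simpa using bot_lt_iff_ne_bot.2 (Polynomial.degree_ne_bot.2 hA0)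
      · have : P = E := by linear_combination (norm := ring_nf) hPE
        rw [this, hE]; ring
    · have hlt : (P - E).natDegree < d :=
        lt_of_lt_of_le (Polynomial.natDegree_lt_natDegree hPE hsub) hPd
      have hPEco : ∀ i, Valued.v ((P - E).coeff i) ≤ 1 := by
        intro i
        rw [Polynomial.coeff_sub]
        exact Valued.v.map_sub _ _ |>.trans (max_le (hP i) (hEco i))
      obtain ⟨Q', R', hR'deg, hQ'co, hR'co, hPE'⟩ := ih _ hlt (P - E) (le_refl _) hPEco
      refine ⟨Q' + Polynomial.C lc * Polynomial.X ^ k, R', hR'deg, ?_, hR'co, ?_⟩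
      · intro i
        rw [Polynomial.coeff_add]
        exact Valued.v.map_add_le (hQ'co i) (hQk i)
      · have : P = (P - E) + E := by ring
        rw [this, hPE', hE]; ring

/-- One step of the successive approximation for Weierstrass division. -/
lemma aux_step {π : K} (hπ0 : Valued.v π ≠ 0) (hπ1 : Valued.v π < 1)
    (hdisc : ∀ x : K, x ≠ 0 → ∃ n : ℤ, Valued.v x = Valued.v π ^ n)
    {F : PowerSeries K} {N : ℕ} (hFres : IsRestrictedPS K F)
    (hF1 : ∀ n, Valued.v (coeff n F) ≤ 1) (hFN : Valued.v (coeff N F) = 1)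
    (hFgt : ∀ n, N < n → Valued.v (coeff n F) < 1)
    (h : PowerSeries K) (hres : IsRestrictedPS K h) (hb : ∀ n, Valued.v (coeff n h) ≤ 1) :
    ∃ (q r : Polynomial K) (h' : PowerSeries K),
      r.degree < (N : WithBot ℕ) ∧ (∀ i, Valued.v (q.coeff i) ≤ 1) ∧
      (∀ i, Valued.v (r.coeff i) ≤ 1) ∧ IsRestrictedPS K h' ∧
      (∀ n, Valued.v (coeff n h') ≤ 1) ∧
      h = (q : PowerSeries K) * F + (r : PowerSeries K) + PowerSeries.C π * h' := by
  have hπne : π ≠ 0 := fun hc => hπ0 (by rw [hc]; simp)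
  have hvπpos : (0:ℝ≥0) < Valued.v π := pos_iff_ne_zero.2 hπ0
  -- decompose F
  set A : Polynomial K := PowerSeries.trunc (N + 1) F with hA
  have hAco : ∀ i, A.coeff i = if i < N + 1 then coeff i F else 0 := by
    intro i; rw [hA, PowerSeries.coeff_trunc]
  have hAN : A.coeff N = coeff N F := by rw [hAco]; simp
  have hFNne : coeff N F ≠ 0 := by
    intro hc; rw [hc, map_zero] at hFN; exact one_ne_zero hFN.symm
  have hAcoz : ∀ i, N < i → A.coeff i = 0 := by
    intro i hi; rw [hAco, if_neg (by omega)]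
  have hAdeg : A.degree = N := by
    refine le_antisymm (Polynomial.degree_le_iff_coeff_zero _ _ |>.2 ?_) ?_
    · intro m hm
      refine hAcoz m ?_
      exact_mod_cast hm
    · exact Polynomial.le_degree_of_ne_zero (by rw [hAN]; exact hFNne)
  set a : K := coeff N F with ha
  have hva : Valued.v a = 1 := hFN
  have hva0 : a ≠ 0 := hFNne
  have hvainv : Valued.v a⁻¹ = 1 := by
    rw [map_inv₀, hva]; simp
  set A' : Polynomial K := Polynomial.C a⁻¹ * A with hA'
  have hA'deg : A'.degree = N := by
    rw [hA', Polynomial.degree_C_mul (inv_ne_zero hva0), hAdeg]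
  have hA'monic : A'.Monic := by
    have hlc : A.leadingCoeff = a := by
      rw [Polynomial.leadingCoeff, Polynomial.natDegree_eq_of_degree_eq_some hAdeg, hAN]
    rw [Polynomial.Monic, hA', Polynomial.leadingCoeff_mul, Polynomial.leadingCoeff_C, hlc]
    exact inv_mul_cancel₀ hva0
  have hA'co : ∀ i, Valued.v (A'.coeff i) ≤ 1 := by
    intro i
    rw [hA', Polynomial.coeff_C_mul, map_mul, hvainv, one_mul]
    rw [hAco]
    split_ifs
    · exact hF1 i
    · simp
  -- decompose h
  obtain ⟨D, hD⟩ := ((aux_tendsto_iff.1 hres) _ hvπpos).exists_forall_of_atTop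
  set P : Polynomial K := PowerSeries.trunc (D + 1) h with hP
  have hPco : ∀ i, P.coeff i = if i < D + 1 then coeff i h else 0 := by
    intro i; rw [hP, PowerSeries.coeff_trunc]
  have hPb : ∀ i, Valued.v (P.coeff i) ≤ 1 := by
    intro i
    rw [hPco]
    split_ifs
    · exact hb i
    · simp
  obtain ⟨Q, R, hRdeg, hQco, hRco, hPQR⟩ := aux_polydiv A' hA'monic hA'co P.natDegree P (le_refl _) hPb
  set q : Polynomial K := Q * Polynomial.C a⁻¹ with hq
  have hqco : ∀ i, Valued.v (q.coeff i) ≤ 1 := by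
    intro i
    rw [hq, Polynomial.coeff_mul_C, map_mul, hvainv, mul_one]
    exact hQco i
  -- the small part
  set B : PowerSeries K := F - (A : PowerSeries K) with hB
  have hBco : ∀ n, Valued.v (coeff n B) ≤ Valued.v π := by
    intro n
    rw [hB, map_sub, Polynomial.coeff_coe, hAco]
    split_ifs with hn
    · simp
    · rw [sub_zero]
      exact aux_le_vpi hπ0 hπ1 hdisc (hFgt n (by omega))
  have hBres : IsRestrictedPS K B := aux_restricted_sub hFres (aux_restricted_poly A)
  set tail : PowerSeries K := h - (P : PowerSeries K) with htail
  have htailco : ∀ n, Valued.v (coeff n tail) ≤ Valued.v π := by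
    intro n
    rw [htail, map_sub, Polynomial.coeff_coe, hPco]
    split_ifs with hn
    · simp
    · rw [sub_zero]
      exact le_of_lt (hD n (by omega))
  have htailres : IsRestrictedPS K tail := aux_restricted_sub hres (aux_restricted_poly P)
  set w : PowerSeries K := tail - (q : PowerSeries K) * B with hw
  have hqBco : ∀ n, Valued.v (coeff n ((q : PowerSeries K) * B)) ≤ Valued.v π := by
    intro n
    rw [PowerSeries.coeff_mul]
    refine Valued.v.map_sum_le ?_
    rintro ⟨i, j⟩ _
    rw [map_mul, Polynomial.coeff_coe]
    calc Valued.v (q.coeff i) * Valued.v (coeff j B)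
        ≤ 1 * Valued.v π := mul_le_mul' (hqco i) (hBco j)
      _ = Valued.v π := one_mul _
  have hwco : ∀ n, Valued.v (coeff n w) ≤ Valued.v π := by
    intro n
    rw [hw, map_sub]
    exact (Valued.v.map_sub _ _).trans (max_le (htailco n) (hqBco n))
  have hwres : IsRestrictedPS K w :=
    aux_restricted_sub htailres (aux_restricted_poly_mul hqco hBres)
  set h' : PowerSeries K := PowerSeries.C π⁻¹ * w with hh'
  have hπinv : Valued.v π⁻¹ * Valued.v π = 1 := by
    rw [← map_mul]
    rw [inv_mul_cancel₀ hπne]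
    simp
  have hh'co : ∀ n, Valued.v (coeff n h') ≤ 1 := by
    intro n
    rw [hh', PowerSeries.coeff_C_mul, map_mul]
    calc Valued.v π⁻¹ * Valued.v (coeff n w)
        ≤ Valued.v π⁻¹ * Valued.v π := mul_le_mul_right (hwco n) _
      _ = 1 := hπinv
  refine ⟨q, R, h', ?_, hqco, hRco, aux_restricted_C_mul _ hwres, hh'co, ?_⟩
  · rw [← hA'deg]; exact hRdeg
  · have hCw : PowerSeries.C π * h' = w := by
      rw [hh', ← mul_assoc, ← map_mul, mul_inv_cancel₀ hπne, map_one, one_mul]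
    rw [hCw, hw, htail]
    have hPA : (P : PowerSeries K) = (q : PowerSeries K) * (A : PowerSeries K) + (R : PowerSeries K) := by
      have : P = q * A + R := by
        rw [hPQR, hq, hA']
        ring
      rw [this]
      push_cast
      ring
    have hFA : (A : PowerSeries K) = F - B := by rw [hB]; ring
    rw [hPA, hFA]
    ring

/-- Weierstrass division in the Tate algebra. -/
lemma aux_division [CompleteSpace K] {π : K} (hπ0 : Valued.v π ≠ 0) (hπ1 : Valued.v π < 1)
    (hdisc : ∀ x : K, x ≠ 0 → ∃ n : ℤ, Valued.v x = Valued.v π ^ n)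
    {F : PowerSeries K} {N : ℕ} (hFres : IsRestrictedPS K F)
    (hF1 : ∀ n, Valued.v (coeff n F) ≤ 1) (hFN : Valued.v (coeff N F) = 1)
    (hFgt : ∀ n, N < n → Valued.v (coeff n F) < 1)
    (h : PowerSeries K) (hres : IsRestrictedPS K h) (hb : ∀ n, Valued.v (coeff n h) ≤ 1) :
    ∃ (q : PowerSeries K) (r : Polynomial K), IsRestrictedPS K q ∧
      (∀ n, Valued.v (coeff n q) ≤ 1) ∧ r.degree < (N : WithBot ℕ) ∧
      (∀ i, Valued.v (r.coeff i) ≤ 1) ∧ h = q * F + (r : PowerSeries K) := by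
  classical
  have hπne : π ≠ 0 := fun hc => hπ0 (by rw [hc]; simp)
  have hvπ1 : Valued.v π ≤ 1 := le_of_lt hπ1
  have hpowten : Tendsto (fun k : ℕ => Valued.v π ^ k) atTop (nhds 0) := by
    simpa using NNReal.tendsto_pow_atTop_nhds_zero_of_lt_one hπ1
  -- the iteration
  have hstep : ∀ x : {x : PowerSeries K // IsRestrictedPS K x ∧ ∀ n, Valued.v (coeff n x) ≤ 1},
      ∃ (q r : Polynomial K) (h' : PowerSeries K),
      r.degree < (N : WithBot ℕ) ∧ (∀ i, Valued.v (q.coeff i) ≤ 1) ∧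
      (∀ i, Valued.v (r.coeff i) ≤ 1) ∧ IsRestrictedPS K h' ∧
      (∀ n, Valued.v (coeff n h') ≤ 1) ∧
      (x : PowerSeries K) = (q : PowerSeries K) * F + (r : PowerSeries K) + PowerSeries.C π * h' :=
    fun x => aux_step hπ0 hπ1 hdisc hFres hF1 hFN hFgt x.1 x.2.1 x.2.2
  choose qf rf hf hdeg hqco hrco hres' hb' heq using hstep
  set next : {x : PowerSeries K // IsRestrictedPS K x ∧ ∀ n, Valued.v (coeff n x) ≤ 1} →
      {x : PowerSeries K // IsRestrictedPS K x ∧ ∀ n, Valued.v (coeff n x) ≤ 1} :=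
    fun x => ⟨hf x, hres' x, hb' x⟩ with hnext
  set S : ℕ → {x : PowerSeries K // IsRestrictedPS K x ∧ ∀ n, Valued.v (coeff n x) ≤ 1} :=
    fun i => next^[i] ⟨h, hres, hb⟩ with hSdef
  have hS0 : (S 0 : PowerSeries K) = h := rfl
  have hSsucc : ∀ i, S (i + 1) = next (S i) := by
    intro i
    rw [hSdef]
    simp only []
    rw [Function.iterate_succ_apply']
  have hid : ∀ i, (S i : PowerSeries K) =
      (qf (S i) : PowerSeries K) * F + (rf (S i) : PowerSeries K)
        + PowerSeries.C π * (S (i+1) : PowerSeries K) := by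
    intro i
    rw [hSsucc i]
    exact heq (S i)
  -- telescoping identity
  have htel : ∀ k, h = (∑ i ∈ Finset.range k, PowerSeries.C (π ^ i) * (qf (S i) : PowerSeries K)) * F
      + (∑ i ∈ Finset.range k, PowerSeries.C (π ^ i) * (rf (S i) : PowerSeries K))
      + PowerSeries.C (π ^ k) * (S k : PowerSeries K) := by
    intro k
    induction k with
    | zero => simp [hS0]
    | succ k ihk =>
      rw [Finset.sum_range_succ, Finset.sum_range_succ]
      rw [ihk]
      conv_lhs => rw [hid k]
      have hCpow : PowerSeries.C (π ^ (k+1)) = PowerSeries.C (π ^ k) * PowerSeries.C π := by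
        rw [← map_mul, pow_succ]
      rw [hCpow]
      ring
  -- coefficientwise sums
  set x : ℕ → ℕ → K := fun n i => π ^ i * (qf (S i)).coeff n with hx
  have hxv : ∀ n i, Valued.v (x n i) ≤ Valued.v π ^ i := by
    intro n i
    rw [hx]
    simp only []
    rw [map_mul, map_pow]
    calc Valued.v π ^ i * Valued.v ((qf (S i)).coeff n)
        ≤ Valued.v π ^ i * 1 := mul_le_mul_right (hqco _ n) _
      _ = Valued.v π ^ i := mul_one _
  have hxsum : ∀ n, Summable (x n) := by
    intro n
    refine aux_summable ?_
    refine tendsto_of_tendsto_of_tendsto_of_le_of_le tendsto_const_nhds hpowten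
      (fun i => zero_le) (fun i => hxv n i)
  set y : ℕ → ℕ → K := fun n i => π ^ i * (rf (S i)).coeff n with hy
  have hyv : ∀ n i, Valued.v (y n i) ≤ Valued.v π ^ i := by
    intro n i
    rw [hy]
    simp only []
    rw [map_mul, map_pow]
    calc Valued.v π ^ i * Valued.v ((rf (S i)).coeff n)
        ≤ Valued.v π ^ i * 1 := mul_le_mul_right (hrco _ n) _
      _ = Valued.v π ^ i := mul_one _
  have hysum : ∀ n, Summable (y n) := by
    intro n
    refine aux_summable ?_
    refine tendsto_of_tendsto_of_tendsto_of_le_of_le tendsto_const_nhds hpowten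
      (fun i => zero_le) (fun i => hyv n i)
  set q : PowerSeries K := PowerSeries.mk (fun n => ∑' i, x n i) with hqdef
  have hqcoeff : ∀ n, coeff n q = ∑' i, x n i := fun n => by rw [hqdef, PowerSeries.coeff_mk]
  set rc : ℕ → K := fun n => ∑' i, y n i with hrcdef
  set r : Polynomial K := ∑ n ∈ Finset.range N, Polynomial.C (rc n) * Polynomial.X ^ n with hrdef
  have hrcoeff : ∀ i, r.coeff i = if i < N then rc i else 0 := by
    intro i
    rw [hrdef, Polynomial.finset_sum_coeff]
    have : ∀ n ∈ Finset.range N, (Polynomial.C (rc n) * Polynomial.X ^ n).coeff i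
        = if i = n then rc n else 0 := by
      intro n _
      rw [Polynomial.coeff_C_mul, Polynomial.coeff_X_pow, mul_ite, mul_one, mul_zero]
    rw [Finset.sum_congr rfl this, Finset.sum_ite_eq (Finset.range N) i rc]
    simp [Finset.mem_range]
  -- tail bounds
  have hxtail : ∀ n k, Valued.v (coeff n q - ∑ i ∈ Finset.range k, x n i) ≤ Valued.v π ^ k := by
    intro n k
    have hsplit := Summable.sum_add_tsum_nat_add (f := x n) k (hxsum n)
    have : coeff n q - ∑ i ∈ Finset.range k, x n i = ∑' i, x n (i + k) := by
      rw [hqcoeff n, ← hsplit]; ring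
    rw [this]
    refine aux_v_tsum_le ((summable_nat_add_iff k).2 (hxsum n)) ?_
    intro i
    calc Valued.v (x n (i + k)) ≤ Valued.v π ^ (i + k) := hxv n _
      _ = Valued.v π ^ i * Valued.v π ^ k := pow_add _ _ _
      _ ≤ 1 * Valued.v π ^ k := mul_le_mul_left (pow_le_one₀ (zero_le) hvπ1) _
      _ = Valued.v π ^ k := one_mul _
  have hytail : ∀ n k, Valued.v (rc n - ∑ i ∈ Finset.range k, y n i) ≤ Valued.v π ^ k := by
    intro n k
    have hsplit := Summable.sum_add_tsum_nat_add (f := y n) k (hysum n)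
    have : rc n - ∑ i ∈ Finset.range k, y n i = ∑' i, y n (i + k) := by
      rw [hrcdef]; simp only []; rw [← hsplit]; ring
    rw [this]
    refine aux_v_tsum_le ((summable_nat_add_iff k).2 (hysum n)) ?_
    intro i
    calc Valued.v (y n (i + k)) ≤ Valued.v π ^ (i + k) := hyv n _
      _ = Valued.v π ^ i * Valued.v π ^ k := pow_add _ _ _
      _ ≤ 1 * Valued.v π ^ k := mul_le_mul_left (pow_le_one₀ (zero_le) hvπ1) _
      _ = Valued.v π ^ k := one_mul _
  -- bounds on q and r
  have hqb : ∀ n, Valued.v (coeff n q) ≤ 1 := by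
    intro n
    rw [hqcoeff n]
    refine aux_v_tsum_le (hxsum n) (fun i => ?_)
    calc Valued.v (x n i) ≤ Valued.v π ^ i := hxv n i
      _ ≤ 1 := pow_le_one₀ (zero_le) hvπ1
  have hrb : ∀ i, Valued.v (r.coeff i) ≤ 1 := by
    intro i
    rw [hrcoeff i]
    split_ifs
    · refine aux_v_tsum_le (hysum i) (fun j => ?_)
      calc Valued.v (y i j) ≤ Valued.v π ^ j := hyv i j
        _ ≤ 1 := pow_le_one₀ (zero_le) hvπ1
    · simp
  have hrdeg : r.degree < (N : WithBot ℕ) := by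
    rw [Polynomial.degree_lt_iff_coeff_zero]
    intro m hm
    rw [hrcoeff m, if_neg (by exact_mod_cast not_lt.2 (by exact_mod_cast hm))]
  -- q is restricted
  have hqres : IsRestrictedPS K q := by
    rw [IsRestrictedPS, aux_tendsto_iff]
    intro ε hε
    obtain ⟨k, hk⟩ := (aux_tendsto_iff.1 hpowten ε hε).exists
    set D : ℕ := Finset.sup (Finset.range k) (fun i => (qf (S i)).natDegree) with hD
    filter_upwards [Filter.eventually_gt_atTop D] with n hn
    have hzero : ∑ i ∈ Finset.range k, x n i = 0 := by
      refine Finset.sum_eq_zero (fun i hi => ?_)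
      rw [hx]
      simp only []
      rw [Polynomial.coeff_eq_zero_of_natDegree_lt (lt_of_le_of_lt (Finset.le_sup (f := fun i => (qf (S i)).natDegree) hi) hn), mul_zero]
    have := hxtail n k
    rw [hzero, sub_zero] at this
    exact lt_of_le_of_lt this hk
  refine ⟨q, r, hqres, hqb, hrdeg, hrb, ?_⟩
  -- final identity, coefficientwise
  ext n
  have hkey : ∀ k, Valued.v (coeff n h - coeff n (q * F + (r : PowerSeries K)))
      ≤ Valued.v π ^ k := by
    intro k
    set Qk : PowerSeries K := ∑ i ∈ Finset.range k, PowerSeries.C (π ^ i) * (qf (S i) : PowerSeries K) with hQk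
    set Rk : PowerSeries K := ∑ i ∈ Finset.range k, PowerSeries.C (π ^ i) * (rf (S i) : PowerSeries K) with hRk
    have hQkco : ∀ m, coeff m Qk = ∑ i ∈ Finset.range k, x m i := by
      intro m
      rw [hQk, map_sum]
      refine Finset.sum_congr rfl (fun i _ => ?_)
      rw [PowerSeries.coeff_C_mul, Polynomial.coeff_coe]
    have hRkco : ∀ m, coeff m Rk = ∑ i ∈ Finset.range k, y m i := by
      intro m
      rw [hRk, map_sum]
      refine Finset.sum_congr rfl (fun i _ => ?_)
      rw [PowerSeries.coeff_C_mul, Polynomial.coeff_coe]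
    have hhk := htel k
    have hsplit : coeff n h - coeff n (q * F + (r : PowerSeries K))
        = coeff n ((Qk - q) * F) + (coeff n Rk - coeff n (r : PowerSeries K))
          + coeff n (PowerSeries.C (π ^ k) * (S k : PowerSeries K)) := by
      conv_lhs => rw [hhk]
      rw [← hQk, ← hRk]
      rw [sub_mul]
      simp only [map_add, map_sub]
      ring
    rw [hsplit]
    refine Valued.v.map_add_le (Valued.v.map_add_le ?_ ?_) ?_
    · rw [PowerSeries.coeff_mul]
      refine Valued.v.map_sum_le ?_
      rintro ⟨i, j⟩ _
      rw [map_mul, map_sub, hQkco i]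
      have h1 : Valued.v (coeff i Qk - coeff i q) ≤ Valued.v π ^ k := by
        rw [hQkco i, Valued.v.map_sub_swap]
        exact hxtail i k
      calc Valued.v (∑ l ∈ Finset.range k, x i l - coeff i q) * Valued.v (coeff j F)
          ≤ Valued.v π ^ k * 1 := by
            refine mul_le_mul' ?_ (hF1 j)
            rw [Valued.v.map_sub_swap]
            exact hxtail i k
        _ = Valued.v π ^ k := mul_one _
    · rcases lt_or_ge n N with hn | hn
      · rw [Polynomial.coeff_coe, hrcoeff n, if_pos hn, hRkco n, Valued.v.map_sub_swap]
        exact hytail n k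
      · have h1 : coeff n (r : PowerSeries K) = 0 := by
          rw [Polynomial.coeff_coe, hrcoeff n, if_neg (not_lt.2 hn)]
        have h2 : coeff n Rk = 0 := by
          rw [hRkco n]
          refine Finset.sum_eq_zero (fun i _ => ?_)
          rw [hy]
          simp only []
          rw [Polynomial.coeff_eq_zero_of_degree_lt
            (lt_of_lt_of_le (hdeg (S i)) (by exact_mod_cast hn)), mul_zero]
        rw [h1, h2, sub_zero, map_zero]
        exact zero_le
    · rw [PowerSeries.coeff_C_mul, map_mul, map_pow]
      calc Valued.v π ^ k * Valued.v (coeff n (S k : PowerSeries K))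
          ≤ Valued.v π ^ k * 1 := mul_le_mul_right ((S k).2.2 n) _
        _ = Valued.v π ^ k := mul_one _
  -- conclude
  have hzero : Valued.v (coeff n h - coeff n (q * F + (r : PowerSeries K))) = 0 := by
    by_contra hc
    have hpos : 0 < Valued.v (coeff n h - coeff n (q * F + (r : PowerSeries K))) :=
      pos_iff_ne_zero.2 hc
    obtain ⟨k, hk⟩ := (aux_tendsto_iff.1 hpowten _ hpos).exists
    exact absurd (hkey k) (not_le.2 hk)
  rw [Valuation.zero_iff, sub_eq_zero] at hzero
  exact hzero


end Aux

section Main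

open PowerSeries

/-- Weierstrass-type factorization in the one-variable Tate algebra over a complete
nonarchimedean discretely valued field: every nonzero restricted power series `f` can be
written as `f = u·g` with `u` a unit of the Tate algebra and `g` a polynomial with
coefficients in the valuation ring; moreover `g` can be chosen monic after scaling. -/
theorem stmt11 (K : Type) [Field K] [Valued K ℝ≥0] [CompleteSpace K]
    (π : K) (hπ0 : Valued.v π ≠ 0) (hπ1 : Valued.v π < 1)
    (hdisc : ∀ x : K, x ≠ 0 → ∃ n : ℤ, Valued.v x = Valued.v π ^ n)
    (f : PowerSeries K) (hf : IsRestrictedPS K f) (hf0 : f ≠ 0) :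
    ∃ (u uinv : PowerSeries K) (g : Polynomial K),
      IsRestrictedPS K u ∧ IsRestrictedPS K uinv ∧ u * uinv = 1 ∧
      (∀ i : ℕ, Valued.v (g.coeff i) ≤ 1) ∧
      f = u * (g : PowerSeries K) ∧
      ∃ c : K, c ≠ 0 ∧ (Polynomial.C c * g).Monic := by
  have hπne : π ≠ 0 := fun hc => hπ0 (by rw [hc]; simp)
  -- normalize f
  obtain ⟨N, hN0, hNle, hNlt⟩ := aux_exists_max hf hf0
  set M : ℝ≥0 := Valued.v (coeff N f) with hM
  have hM0 : M ≠ 0 := by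
    rw [hM, Valuation.ne_zero_iff]; exact hN0
  obtain ⟨m, hm⟩ := hdisc (coeff N f) hN0
  set c : K := π ^ m with hc
  have hc0 : c ≠ 0 := zpow_ne_zero m hπne
  have hvc : Valued.v c = M := by
    rw [hc, map_zpow₀, hM, hm]
  set f₀ : PowerSeries K := PowerSeries.C c⁻¹ * f with hf₀
  have hcinv : Valued.v c⁻¹ = M⁻¹ := by rw [map_inv₀, hvc]
  have hf₀co : ∀ n, Valued.v (coeff n f₀) = M⁻¹ * Valued.v (coeff n f) := by
    intro n
    rw [hf₀, PowerSeries.coeff_C_mul, map_mul, hcinv]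
  have hf₀N : Valued.v (coeff N f₀) = 1 := by
    rw [hf₀co, ← hM, inv_mul_cancel₀ hM0]
  have hf₀1 : ∀ n, Valued.v (coeff n f₀) ≤ 1 := by
    intro n
    rw [hf₀co, ← inv_mul_cancel₀ hM0]
    exact mul_le_mul_right (hNle n) _
  have hf₀gt : ∀ n, N < n → Valued.v (coeff n f₀) < 1 := by
    intro n hn
    rw [hf₀co, ← inv_mul_cancel₀ hM0]
    exact mul_lt_mul_of_pos_left (hNlt n hn) (pos_iff_ne_zero.2 (inv_ne_zero hM0))
  have hf₀res : IsRestrictedPS K f₀ := aux_restricted_C_mul _ hf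
  -- first division : X^N by f₀
  set PX : Polynomial K := Polynomial.X ^ N with hPX
  have hPXco : ∀ i, PX.coeff i = if i = N then 1 else 0 := by
    intro i; rw [hPX, Polynomial.coeff_X_pow]
  have hPXb : ∀ n, Valued.v (coeff n (PX : PowerSeries K)) ≤ 1 := by
    intro n
    rw [Polynomial.coeff_coe, hPXco]
    split_ifs <;> simp
  obtain ⟨q, r, hqres, hqb, hrdeg, hrb, hdiv1⟩ := aux_division hπ0 hπ1 hdisc hf₀res hf₀1 hf₀N hf₀gt
    (PX : PowerSeries K) (aux_restricted_poly PX) hPXb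
  set g : Polynomial K := PX - r with hg
  have hgmonic : g.Monic := by
    rw [hg, hPX]
    exact Polynomial.monic_X_pow_sub hrdeg
  have hgdeg : g.degree = N := by
    have h1 : PX.degree = (N : WithBot ℕ) := by rw [hPX]; exact Polynomial.degree_X_pow N
    rw [hg, Polynomial.degree_sub_eq_left_of_degree_lt (by rw [h1]; exact hrdeg), h1]
  have hgPS : (g : PowerSeries K) = q * f₀ := by
    rw [hg]
    push_cast
    rw [hdiv1]
    ring
  have hg0 : g ≠ 0 := hgmonic.ne_zero
  have hq0 : q ≠ 0 := by
    intro hq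
    rw [hq, zero_mul] at hgPS
    exact hg0 (Polynomial.coe_eq_zero_iff.1 hgPS)
  -- q has unit shape
  obtain ⟨m₀, hm₀0, hm₀le, hm₀lt⟩ := aux_exists_max hqres hq0
  have hvm₀ : Valued.v (coeff m₀ q) ≠ 0 := by rw [Valuation.ne_zero_iff]; exact hm₀0
  have hgauss := aux_gauss (F := f₀) (q := q) (N := N) (m := m₀)
    (fun n => by rw [hf₀N]; exact hf₀1 n)
    (fun n hn => by rw [hf₀N]; exact hf₀gt n hn)
    (by rw [hf₀N]; exact one_ne_zero)
    hm₀le hm₀lt hvm₀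
  have hm₀eq : m₀ = 0 := by
    by_contra hm₀ne
    have hcoeffg : coeff (m₀ + N) (q * f₀) = g.coeff (m₀ + N) := by
      rw [← hgPS, Polynomial.coeff_coe]
    have hzero : g.coeff (m₀ + N) = 0 := by
      refine Polynomial.coeff_eq_zero_of_degree_lt ?_
      rw [hgdeg]
      exact_mod_cast Nat.lt_add_of_pos_left (Nat.pos_of_ne_zero hm₀ne)
    rw [hcoeffg, hzero, map_zero] at hgauss
    rw [hf₀N, mul_one] at hgauss
    exact hvm₀ hgauss.symm
  have hgN : g.coeff N = 1 := by
    have := hgmonic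
    rw [Polynomial.Monic, Polynomial.leadingCoeff, Polynomial.natDegree_eq_of_degree_eq_some hgdeg] at this
    exact this
  have hq0v : Valued.v (coeff 0 q) = 1 := by
    subst hm₀eq
    rw [hf₀N, mul_one] at hgauss
    have hcoeffg : coeff (0 + N) (q * f₀) = g.coeff N := by
      rw [← hgPS, Polynomial.coeff_coe, zero_add]
    rw [hcoeffg, hgN, map_one] at hgauss
    exact hgauss.symm
  have hqlt : ∀ n, 0 < n → Valued.v (coeff n q) < 1 := by
    intro n hn
    rw [← hq0v]
    rw [← hm₀eq] at hn ⊢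
    exact hm₀lt n hn
  -- second division : 1 by q
  have h1res : IsRestrictedPS K (1 : PowerSeries K) := by
    have := aux_restricted_poly (1 : Polynomial K)
    rwa [Polynomial.coe_one] at this
  have h1b : ∀ n, Valued.v (coeff n (1 : PowerSeries K)) ≤ 1 := by
    intro n
    rw [PowerSeries.coeff_one]
    split_ifs <;> simp
  obtain ⟨s, r', hsres, hsb, hr'deg, hr'b, hdiv2⟩ := aux_division (N := 0) hπ0 hπ1 hdisc hqres hqb hq0v
    (fun n hn => hqlt n hn) 1 h1res h1b
  have hr'0 : r' = 0 := by
    rw [← Polynomial.degree_eq_bot]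
    exact Nat.WithBot.lt_zero_iff.1 (by exact_mod_cast hr'deg)
  rw [hr'0] at hdiv2
  have hsq : s * q = 1 := by
    rw [hdiv2]; push_cast; ring
  -- assemble
  refine ⟨PowerSeries.C c * s, PowerSeries.C c⁻¹ * q, g, ?_, ?_, ?_, ?_, ?_, 1, one_ne_zero, ?_⟩
  · exact aux_restricted_C_mul _ hsres
  · exact aux_restricted_C_mul _ hqres
  · calc PowerSeries.C c * s * (PowerSeries.C c⁻¹ * q)
        = (PowerSeries.C c * PowerSeries.C c⁻¹) * (s * q) := by ring
      _ = 1 := by rw [hsq, ← map_mul, mul_inv_cancel₀ hc0, map_one, mul_one]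
  · intro i
    rw [hg, Polynomial.coeff_sub, hPXco]
    refine (Valued.v.map_sub _ _).trans (max_le ?_ (hrb i))
    split_ifs <;> simp
  · have hff₀ : f = PowerSeries.C c * f₀ := by
      rw [hf₀, ← mul_assoc, ← map_mul, mul_inv_cancel₀ hc0, map_one, one_mul]
    calc f = PowerSeries.C c * f₀ := hff₀
      _ = PowerSeries.C c * ((s * q) * f₀) := by rw [hsq, one_mul]
      _ = PowerSeries.C c * s * (q * f₀) := by ring
      _ = PowerSeries.C c * s * (g : PowerSeries K) := by rw [hgPS]
  · rw [Polynomial.C_1, one_mul]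
    exact hgmonic

end Main
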